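/- arXiv:2311.10153 — 2 statements merged into one kernel-verified Lean document; each statement's English description precedes it below -/
import Mathlib

section
/- Fix z ∈ [k]^n and let A be a random symmetric {0,1} matrix with zero diagonal whose entries A_{ij}, 1 ≤ i < j ≤ n, are independent Bernoulli(ρ S_{z_i z_j}). For e ∈ [k]^n let W(e,z) = (1/2) Σ_{1≤a,b≤k} ( o_{ab}(e)/n² − E[o_{ab}(e)]/n² − o_{ab}(z)/n² + E[o_{ab}(z)]/n² ) log S_{ab}. Then for every x > 0, P( W(e,z) > x ) ≤ exp( −sup_{t∈(0,1]} ( n² x t − ρ n² C_t(R(e,z),S) ) + D ρ d(e,z)² ), where d(e,z) = #{i : e_i ≠ z_i} and D = max_{t∈[0,1]} max_{a≠a', b≠b'} K_t(S_{ab}‖S_{a'b'}). -/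
open Finset Filter
open scoped Classical BigOperators Topology

noncomputable section

namespace SBM

variable {n k : ℕ}

/-- Number of nodes with label `a`. -/
def nCount (z : Fin n → Fin k) (a : Fin k) : ℕ :=
  (Finset.univ.filter fun i => z i = a).card

/-- `n_{ab}(z)`. -/
def nab (z : Fin n → Fin k) (a b : Fin k) : ℝ :=
  if a = b then (nCount z a : ℝ) * ((nCount z a : ℝ) - 1)
  else (nCount z a : ℝ) * (nCount z b : ℝ)

/-- `o_{ab}(z)`: number of (ordered) edges between communities `a` and `b`. -/
def oab (A : Fin n → Fin n → Bool) (z : Fin n → Fin k) (a b : Fin k) : ℝ :=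
  ∑ i : Fin n, ∑ j : Fin n, if z i = a ∧ z j = b ∧ A i j = true then (1 : ℝ) else 0

/-- `τ(x) = x log x + (1-x) log(1-x)` (with `Real.log 0 = 0`, so `0 log 0 = 0`). -/
def tau (x : ℝ) : ℝ := x * Real.log x + (1 - x) * Real.log (1 - x)

/-- Maximum likelihood modularity. -/
def QML (A : Fin n → Fin n → Bool) (z : Fin n → Fin k) : ℝ :=
  (1 / (2 * (n : ℝ) ^ 2)) *
    ∑ a : Fin k, ∑ b : Fin k, nab z a b * tau (oab A z a b / nab z a b)

/-- The Beta function. -/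
def Beta (x y : ℝ) : ℝ := Real.Gamma x * Real.Gamma y / Real.Gamma (x + y)

def otilde (A : Fin n → Fin n → Bool) (z : Fin n → Fin k) (a b : Fin k) : ℝ :=
  if a = b then oab A z a b / 2 else oab A z a b

def ntilde (z : Fin n → Fin k) (a b : Fin k) : ℝ :=
  if a = b then nab z a b / 2 else nab z a b

/-- Integrated conditional likelihood modularity. -/
def QICL (A : Fin n → Fin n → Bool) (z : Fin n → Fin k) : ℝ :=
  (1 / (n : ℝ) ^ 2) *
    ∑ p ∈ Finset.univ.filter (fun p : Fin k × Fin k => p.1 ≤ p.2),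
      Real.log (Beta (otilde A z p.1 p.2 + 1 / 2)
          (ntilde z p.1 p.2 - otilde A z p.1 p.2 + 1 / 2) / Beta (1 / 2) (1 / 2))

/-- The adjacency matrix is symmetric with zero diagonal. -/
def ValidAdj (A : Fin n → Fin n → Bool) : Prop :=
  (∀ i j, A i j = A j i) ∧ ∀ i, A i i = false

/-- Density of the conditional SBM edge model given the labels `z`:
independent Bernoulli(`ρ S (z i) (z j)`) edges for `i < j`. -/
def edgeDensity (ρ : ℝ) (S : Matrix (Fin k) (Fin k) ℝ) (z : Fin n → Fin k)
    (A : Fin n → Fin n → Bool) : ℝ :=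
  ∏ p ∈ Finset.univ.filter (fun p : Fin n × Fin n => p.1 < p.2),
    (if A p.1 p.2 then ρ * S (z p.1) (z p.2) else 1 - ρ * S (z p.1) (z p.2))

/-- Conditional probability of an event on the adjacency matrix, given labels `z`. -/
def condProb (ρ : ℝ) (S : Matrix (Fin k) (Fin k) ℝ) (z : Fin n → Fin k)
    (E : (Fin n → Fin n → Bool) → Prop) : ℝ :=
  ∑ A : Fin n → Fin n → Bool, if ValidAdj A ∧ E A then edgeDensity ρ S z A else 0

/-- Conditional expectation of a function of the adjacency matrix, given labels `z`. -/
def condExp (ρ : ℝ) (S : Matrix (Fin k) (Fin k) ℝ) (z : Fin n → Fin k)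
    (f : (Fin n → Fin n → Bool) → ℝ) : ℝ :=
  ∑ A : Fin n → Fin n → Bool, if ValidAdj A then edgeDensity ρ S z A * f A else 0

/-- Probability of an event under the SBM: labels are i.i.d. `π`, edges are conditionally
independent Bernoulli(`ρ S (z i) (z j)`). -/
def sbmProb (π : Fin k → ℝ) (ρ : ℝ) (S : Matrix (Fin k) (Fin k) ℝ)
    (E : (Fin n → Fin k) → (Fin n → Fin n → Bool) → Prop) : ℝ :=
  ∑ z : Fin n → Fin k, (∏ i, π (z i)) * condProb ρ S z (E z)

/-- Number of disagreements between two label vectors. -/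
def hamming (e z : Fin n → Fin k) : ℕ :=
  (Finset.univ.filter fun i => e i ≠ z i).card

/-- Misclassification distance: minimum number of disagreements over permutations of labels. -/
def mDist (e z : Fin n → Fin k) : ℕ :=
  Finset.univ.inf' ⟨Equiv.refl (Fin k), Finset.mem_univ _⟩
    (fun σ : Equiv.Perm (Fin k) => (Finset.univ.filter fun i => e i ≠ σ (z i)).card)

/-- Confusion matrix `R(e,z)`. -/
def confusion (e z : Fin n → Fin k) : Matrix (Fin k) (Fin k) ℝ :=
  Matrix.of fun a b => (1 / (n : ℝ)) * ∑ i : Fin n, if e i = a ∧ z i = b then (1 : ℝ) else 0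

/-- `[R 1]_a` : row sums. -/
def rowSum (R : Matrix (Fin k) (Fin k) ℝ) (a : Fin k) : ℝ := ∑ j, R a j

/-- `[Rᵀ 1]_a` : column sums. -/
def colSum (R : Matrix (Fin k) (Fin k) ℝ) (a : Fin k) : ℝ := ∑ i, R i a

/-- `[P_R]_{ab}`. -/
def PR (P R : Matrix (Fin k) (Fin k) ℝ) (n : ℕ) (a b : Fin k) : ℝ :=
  ((R * P * R.transpose) a b - (if a = b then (∑ i, P i i * R a i) / n else 0)) /
    (rowSum R a * (rowSum R b - if a = b then 1 / (n : ℝ) else 0))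

/-- The population modularity `H_{P,n}(R)`. -/
def Hmod (P R : Matrix (Fin k) (Fin k) ℝ) (n : ℕ) : ℝ :=
  (1 / 2) * ∑ a : Fin k, ∑ b : Fin k,
    rowSum R a * (rowSum R b - if a = b then 1 / (n : ℝ) else 0) * tau (PR P R n a b)

/-- The centered modularity `X(e,z)` (with `P = ρ S`). -/
def Xfun (ρ : ℝ) (S : Matrix (Fin k) (Fin k) ℝ) (A : Fin n → Fin n → Bool)
    (e z : Fin n → Fin k) : ℝ :=
  (1 / (2 * (n : ℝ) ^ 2)) * ∑ a : Fin k, ∑ b : Fin k,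
    nab e a b * (tau (oab A e a b / nab e a b) - tau (PR (ρ • S) (confusion e z) n a b))

/-- The limit functional `G_S(R)` (terms with `[RSRᵀ]_{ab} = 0` vanish). -/
def GS (S R : Matrix (Fin k) (Fin k) ℝ) : ℝ :=
  ∑ a : Fin k, ∑ b : Fin k,
    (R * S * R.transpose) a b *
      Real.log ((R * S * R.transpose) a b / (rowSum R a * rowSum R b))

/-- Entry-wise `ℓ¹` norm of a matrix. -/
def l1norm (M : Matrix (Fin k) (Fin k) ℝ) : ℝ := ∑ a : Fin k, ∑ b : Fin k, |M a b|

/-- `s_max`. -/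
def sMax (S : Matrix (Fin k) (Fin k) ℝ) : ℝ :=
  sSup (Set.range fun p : Fin k × Fin k => S p.1 p.2)

/-- `s_min`. -/
def sMin (S : Matrix (Fin k) (Fin k) ℝ) : ℝ :=
  sInf (Set.range fun p : Fin k × Fin k => S p.1 p.2)

/-- `H_t(p‖q) = (1-t)p + tq - p^{1-t} q^t`. -/
def Ht (t p q : ℝ) : ℝ := (1 - t) * p + t * q - p ^ (1 - t) * q ^ t

/-- `max_{t ∈ [0,1]} Σ_a π_a H_t(S_{ab} ‖ S_{ab'})`. -/
def CtMax (π : Fin k → ℝ) (S : Matrix (Fin k) (Fin k) ℝ) (b b' : Fin k) : ℝ :=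
  sSup ((fun t => ∑ a : Fin k, π a * Ht t (S a b) (S a b')) '' Set.Icc (0 : ℝ) 1)

/-- The phase-transition constant `C(π,S)`. -/
def Cconst (π : Fin k → ℝ) (S : Matrix (Fin k) (Fin k) ℝ) : ℝ :=
  sInf {x : ℝ | ∃ b b' : Fin k, b ≠ b' ∧ x = CtMax π S b b'}

/-- `K_t(p‖q) = p^{1-t} q^t + t p log(p/q) - p`. -/
def Kt (t p q : ℝ) : ℝ := p ^ (1 - t) * q ^ t + t * p * Real.log (p / q) - p

/-- `K₁(p‖q) = p log(p/q) + q - p`. -/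
def K1 (p q : ℝ) : ℝ := p * Real.log (p / q) + q - p

/-- Kullback–Leibler divergence between Bernoulli(s) and Bernoulli(t). -/
def KLBern (s t : ℝ) : ℝ := s * Real.log (s / t) + (1 - s) * Real.log ((1 - s) / (1 - t))

/-- Off-diagonal pairs of labels. -/
def offDiag (k : ℕ) : Finset (Fin k × Fin k) :=
  Finset.univ.filter fun p => p.1 ≠ p.2

/-- `C_t(R,S) = Σ_a Σ_{b ≠ b'} [Rᵀ1]_a K_t(S_{ab}‖S_{ab'}) R_{b'b}`. -/
def CtRS (t : ℝ) (R S : Matrix (Fin k) (Fin k) ℝ) : ℝ :=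
  ∑ a : Fin k, ∑ p ∈ offDiag k, colSum R a * Kt t (S a p.1) (S a p.2) * R p.2 p.1

/-- Membership in `F(n,α)`: all communities have size at least `α n`. -/
def inF (α : ℝ) (z : Fin n → Fin k) : Prop := ∀ a, α * n ≤ (nCount z a : ℝ)

/-- `zh` is a maximizer of the ML modularity over `F(n,α)`. -/
def IsMLE (α : ℝ) (A : Fin n → Fin n → Bool) (zh : Fin n → Fin k) : Prop :=
  inF α zh ∧ ∀ e : Fin n → Fin k, inF α e → QML A e ≤ QML A zh

/-- `zh` is a maximizer of the ICL modularity over `F(n,α)`. -/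
def IsICL (α : ℝ) (A : Fin n → Fin n → Bool) (zh : Fin n → Fin k) : Prop :=
  inF α zh ∧ ∀ e : Fin n → Fin k, inF α e → QICL A e ≤ QICL A zh


/-! ### Auxiliary lemmas for `stmt16` -/

lemma rpow_mix (p q : ℝ) (hp : 0 < p) (hq : 0 < q) (t : ℝ) :
    p ^ (1 - t) * q ^ t = p * Real.exp (t * (Real.log q - Real.log p)) := by
  rw [Real.rpow_def_of_pos hp, Real.rpow_def_of_pos hq, ← Real.exp_add]
  conv_rhs => rw [← Real.exp_log hp, ← Real.exp_add]
  rw [Real.log_exp]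
  congr 1
  ring

lemma Kt_nonneg {p q : ℝ} (hp : 0 < p) (hq : 0 < q) {t : ℝ} : 0 ≤ Kt t p q := by
  have h := Real.add_one_le_exp (t * (Real.log q - Real.log p))
  have hmix := rpow_mix p q hp hq t
  have hlog : Real.log (p / q) = Real.log p - Real.log q := Real.log_div hp.ne' hq.ne'
  unfold Kt
  rw [hmix, hlog]
  nlinarith [Real.exp_pos (t * (Real.log q - Real.log p))]

lemma Kt_self {p : ℝ} (hp : 0 < p) (t : ℝ) : Kt t p p = 0 := by
  unfold Kt
  rw [div_self hp.ne', Real.log_one, ← Real.rpow_add hp]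
  ring_nf
  rw [Real.rpow_one]
  ring

lemma Kt_le (p q : ℝ) (hp : 0 < p) (hq : 0 < q) {t : ℝ} (ht : t ∈ Set.Icc (0:ℝ) 1) :
    Kt t p q ≤ max p q + |p * Real.log (p / q)| := by
  obtain ⟨ht0, ht1⟩ := ht
  have hM : 0 < max p q := lt_max_of_lt_left hp
  have h1 : p ^ (1 - t) ≤ (max p q) ^ (1 - t) :=
    Real.rpow_le_rpow hp.le (le_max_left _ _) (by linarith)
  have h2 : q ^ t ≤ (max p q) ^ t :=
    Real.rpow_le_rpow hq.le (le_max_right _ _) ht0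
  have h3 : p ^ (1 - t) * q ^ t ≤ (max p q) ^ (1 - t) * (max p q) ^ t := by
    apply mul_le_mul h1 h2 (Real.rpow_nonneg hq.le _) (Real.rpow_nonneg hM.le _)
  rw [← Real.rpow_add hM] at h3
  simp only [sub_add_cancel, Real.rpow_one] at h3
  have h4 : t * p * Real.log (p / q) ≤ |p * Real.log (p / q)| := by
    calc t * p * Real.log (p / q) ≤ |t * p * Real.log (p / q)| := le_abs_self _
    _ = |t| * |p * Real.log (p / q)| := by rw [mul_assoc, abs_mul]
    _ ≤ 1 * |p * Real.log (p / q)| := by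
        apply mul_le_mul_of_nonneg_right _ (abs_nonneg _)
        rw [abs_of_nonneg ht0]; exact ht1
    _ = _ := one_mul _
  unfold Kt; nlinarith

/-- Per-edge MGF bound. -/
lemma mgf_edge (ρ s s' t : ℝ) (hs : 0 < s) (hs' : 0 < s') (hρ : 0 < ρ) :
    ρ * s * Real.exp (t * (1 - ρ * s) * (Real.log s' - Real.log s))
      + (1 - ρ * s) * Real.exp (t * (0 - ρ * s) * (Real.log s' - Real.log s))
    ≤ Real.exp (ρ * Kt t s s') := by
  set w := Real.log s' - Real.log s with hw
  set p := ρ * s with hpdef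
  have hp : 0 < p := mul_pos hρ hs
  have key : p * Real.exp (t * (1 - p) * w) + (1 - p) * Real.exp (t * (0 - p) * w)
      = Real.exp (- (t * p * w)) * (1 + p * (Real.exp (t * w) - 1)) := by
    have e1 : t * (1 - p) * w = t * w + - (t * p * w) := by ring
    have e2 : t * (0 - p) * w = - (t * p * w) := by ring
    rw [e1, e2, Real.exp_add]; ring
  rw [key]
  have h1 : 1 + p * (Real.exp (t * w) - 1) ≤ Real.exp (p * (Real.exp (t * w) - 1)) := by
    have := Real.add_one_le_exp (p * (Real.exp (t * w) - 1))
    linarith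
  have hpos : (0:ℝ) ≤ Real.exp (- (t * p * w)) := (Real.exp_pos _).le
  calc Real.exp (- (t * p * w)) * (1 + p * (Real.exp (t * w) - 1))
      ≤ Real.exp (- (t * p * w)) * Real.exp (p * (Real.exp (t * w) - 1)) := by
        apply mul_le_mul_of_nonneg_left h1 hpos
    _ = Real.exp (p * Real.exp (t * w) - p - t * p * w) := by
        rw [← Real.exp_add]; ring_nf
    _ = Real.exp (ρ * Kt t s s') := by
        congr 1
        have hmix := rpow_mix s s' hs hs' t
        have hlog : Real.log (s / s') = Real.log s - Real.log s' :=
          Real.log_div hs.ne' hs'.ne'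
        unfold Kt
        rw [hmix, hlog, hpdef, hw]
        ring

/-- The set of upper-triangular index pairs. -/
def upperT (n : ℕ) : Finset (Fin n × Fin n) :=
  Finset.univ.filter fun p : Fin n × Fin n => p.1 < p.2

/-- extension of an upper-triangular bool assignment to a valid adjacency matrix -/
def extUT (f : {p : Fin n × Fin n // p.1 < p.2} → Bool) : Fin n → Fin n → Bool :=
  fun i j => if h : i < j then f ⟨(i,j), h⟩ else if h' : j < i then f ⟨(j,i), h'⟩ else false

lemma extUT_valid (f : {p : Fin n × Fin n // p.1 < p.2} → Bool) : ValidAdj (extUT f) := by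
  constructor
  · intro i j
    unfold extUT
    rcases lt_trichotomy i j with h | h | h
    · rw [dif_pos h, dif_neg (asymm h), dif_pos h]
    · subst h; simp
    · rw [dif_neg (asymm h), dif_pos h, dif_pos h]
  · intro i; unfold extUT; simp

lemma extUT_restrict {A : Fin n → Fin n → Bool} (hA : ValidAdj A) :
    extUT (fun q => A q.1.1 q.1.2) = A := by
  funext i j
  unfold extUT
  rcases lt_trichotomy i j with h | h | h
  · rw [dif_pos h]
  · subst h; simp [hA.2 i]
  · rw [dif_neg (asymm h), dif_pos h]; exact hA.1 j i

/-- Key factorization: sum over valid adjacency matrices of a product over upper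
pairs equals the product of sums. -/
lemma sum_valid_prod (g : Fin n × Fin n → Bool → ℝ) :
    (∑ A : Fin n → Fin n → Bool,
        if ValidAdj A then ∏ p ∈ upperT n, g p (A p.1 p.2) else 0)
      = ∏ p ∈ upperT n, (g p false + g p true) := by
  classical
  have h1 : (∑ A : Fin n → Fin n → Bool,
        if ValidAdj A then ∏ p ∈ upperT n, g p (A p.1 p.2) else 0)
      = ∑ A ∈ Finset.univ.filter (fun A => ValidAdj A),
          ∏ p ∈ upperT n, g p (A p.1 p.2) := by
    rw [Finset.sum_filter]
  rw [h1]
  have h2 : ∀ p : Fin n × Fin n, (g p false + g p true) = ∑ b : Bool, g p b := by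
    intro p; rw [Fintype.sum_bool]; ring
  rw [Finset.prod_congr rfl (fun p _ => h2 p)]
  have h3 : (∏ p ∈ upperT n, ∑ b : Bool, g p b)
      = ∏ q : {p : Fin n × Fin n // p.1 < p.2}, ∑ b : Bool, g q.1 b := by
    apply Finset.prod_subtype
    intro p; simp [upperT]
  rw [h3, Finset.prod_univ_sum]
  rw [Fintype.piFinset_univ]
  symm
  apply Finset.sum_nbij' (i := fun f => extUT f) (j := fun A q => A q.1.1 q.1.2)
  · intro f _; simp only [Finset.mem_filter, Finset.mem_univ, true_and]
    exact extUT_valid f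
  · intro A _; exact Finset.mem_univ _
  · intro f _
    funext q
    unfold extUT
    rw [dif_pos q.2]
  · intro A hA
    simp only [Finset.mem_filter] at hA
    exact extUT_restrict hA.2
  · intro f _
    have h4 : (∏ p ∈ upperT n, g p (extUT f p.1 p.2))
        = ∏ q : {p : Fin n × Fin n // p.1 < p.2}, g q.1 (extUT f q.1.1 q.1.2) := by
      apply Finset.prod_subtype
      intro p; simp [upperT]
    rw [h4]
    apply Finset.prod_congr rfl
    intro q _
    congr 1
    unfold extUT
    rw [dif_pos q.2]

lemma edgeDensity_eq_prod (ρ : ℝ) (S : Matrix (Fin k) (Fin k) ℝ) (z : Fin n → Fin k)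
    (A : Fin n → Fin n → Bool) :
    edgeDensity ρ S z A = ∏ p ∈ upperT n,
      (if A p.1 p.2 then ρ * S (z p.1) (z p.2) else 1 - ρ * S (z p.1) (z p.2)) := rfl

lemma edge_nonneg (ρ : ℝ) (S : Matrix (Fin k) (Fin k) ℝ) (hSpos : ∀ a b, 0 < S a b)
    (hρ0 : 0 < ρ) (hρ1 : ∀ a b, ρ * S a b < 1) (z : Fin n → Fin k)
    (A : Fin n → Fin n → Bool) : 0 ≤ edgeDensity ρ S z A := by
  rw [edgeDensity_eq_prod]
  apply Finset.prod_nonneg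
  intro p _
  split_ifs
  · exact (mul_pos hρ0 (hSpos _ _)).le
  · linarith [hρ1 (z p.1) (z p.2)]

lemma single_edge (ρ : ℝ) (S : Matrix (Fin k) (Fin k) ℝ) (hSsym : S.IsSymm)
    (z : Fin n → Fin k) (i j : Fin n) :
    (∑ A : Fin n → Fin n → Bool,
        if ValidAdj A then edgeDensity ρ S z A * (if A i j then (1:ℝ) else 0) else 0)
      = if i ≠ j then ρ * S (z i) (z j) else 0 := by
  classical
  by_cases hij : i = j
  · subst hij
    rw [if_neg (by simp)]
    apply Finset.sum_eq_zero
    intro A _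
    split_ifs with h h2
    · rw [h.2 i] at h2; exact absurd h2 (by simp)
    · ring
    · rfl
  · rw [if_pos hij]
    set p0 : Fin n × Fin n := if h : i < j then (i, j) else (j, i) with hp0
    have hij' : i < j ∨ j < i := Ne.lt_or_gt hij
    have hp0u : p0 ∈ upperT n := by
      rw [hp0]; unfold upperT
      split_ifs with h
      · simp [h]
      · simp [hij'.resolve_left h]
    have hz0 : S (z p0.1) (z p0.2) = S (z i) (z j) := by
      rw [hp0]; split_ifs with h
      · rfl
      · exact hSsym.apply (z i) (z j)
    set g : Fin n × Fin n → Bool → ℝ := fun p b =>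
      (if b then ρ * S (z p.1) (z p.2) else 1 - ρ * S (z p.1) (z p.2)) *
        (if p = p0 then (if b then 1 else 0) else 1) with hg
    have hstep : ∀ A : Fin n → Fin n → Bool,
        (if ValidAdj A then edgeDensity ρ S z A * (if A i j then (1:ℝ) else 0) else 0)
          = (if ValidAdj A then ∏ p ∈ upperT n, g p (A p.1 p.2) else 0) := by
      intro A
      by_cases hA : ValidAdj A
      · rw [if_pos hA, if_pos hA]
        have hAij : A i j = A p0.1 p0.2 := by
          rw [hp0]; split_ifs with h
          · rfl
          · exact hA.1 i j
        rw [hg]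
        simp only []
        rw [Finset.prod_mul_distrib]
        rw [edgeDensity_eq_prod]
        congr 1
        rw [Finset.prod_ite_eq' (upperT n) p0 (fun p => if A p.1 p.2 then (1:ℝ) else 0)]
        rw [if_pos hp0u, hAij]
      · rw [if_neg hA, if_neg hA]
    rw [Finset.sum_congr rfl (fun A _ => hstep A), sum_valid_prod]
    rw [Finset.prod_eq_single p0 ?_ ?_]
    · rw [hg]; simp only [if_pos rfl]
      simp [hz0]
    · intro p _ hne
      rw [hg]; simp only [if_neg hne]
      simp
    · intro h; exact absurd hp0u h

/-- The conditional mean of `oab`. -/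
def mu (ρ : ℝ) (S : Matrix (Fin k) (Fin k) ℝ) (z f : Fin n → Fin k) (a b : Fin k) : ℝ :=
  ∑ i : Fin n, ∑ j : Fin n, if f i = a ∧ f j = b ∧ i ≠ j then ρ * S (z i) (z j) else 0

lemma condExp_oab (ρ : ℝ) (S : Matrix (Fin k) (Fin k) ℝ) (hSsym : S.IsSymm)
    (z : Fin n → Fin k) (f : Fin n → Fin k) (a b : Fin k) :
    condExp ρ S z (fun A => oab A f a b) = mu ρ S z f a b := by
  classical
  unfold condExp mu
  have hswap : ∀ A : Fin n → Fin n → Bool,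
      (if ValidAdj A then edgeDensity ρ S z A * oab A f a b else 0)
        = ∑ i : Fin n, ∑ j : Fin n,
            (if f i = a ∧ f j = b then (1:ℝ) else 0) *
              (if ValidAdj A then edgeDensity ρ S z A * (if A i j then (1:ℝ) else 0) else 0) := by
    intro A
    by_cases hA : ValidAdj A
    · rw [if_pos hA]
      unfold oab
      rw [Finset.mul_sum]
      apply Finset.sum_congr rfl; intro i _
      rw [Finset.mul_sum]
      apply Finset.sum_congr rfl; intro j _
      rw [if_pos hA]
      by_cases h1 : f i = a ∧ f j = b
      · by_cases h2 : A i j = true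
        · rw [if_pos ⟨h1.1, h1.2, h2⟩, if_pos h1, if_pos h2]; ring
        · rw [if_neg (by tauto), if_pos h1, if_neg h2]; ring
      · rw [if_neg (by tauto), if_neg h1]; ring
    · rw [if_neg hA]
      symm; apply Finset.sum_eq_zero; intro i _; apply Finset.sum_eq_zero; intro j _
      rw [if_neg hA]; ring
  rw [Finset.sum_congr rfl (fun A _ => hswap A)]
  rw [Finset.sum_comm]
  apply Finset.sum_congr rfl; intro i _
  rw [Finset.sum_comm]
  apply Finset.sum_congr rfl; intro j _
  rw [← Finset.mul_sum, single_edge ρ S hSsym z i j]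
  split_ifs with h1 h2 h3 <;> try ring
  all_goals exfalso; tauto

/-- For a symmetric function with zero diagonal, the full double sum is twice the
sum over the upper triangle. -/
lemma sum_eq_two_mul_upper (d : Fin n → Fin n → ℝ)
    (hsym : ∀ i j, d i j = d j i) (hdiag : ∀ i, d i i = 0) :
    ∑ i : Fin n, ∑ j : Fin n, d i j = 2 * ∑ p ∈ upperT n, d p.1 p.2 := by
  classical
  have h0 : (∑ i : Fin n, ∑ j : Fin n, d i j) = ∑ p : Fin n × Fin n, d p.1 p.2 := by
    rw [← Finset.univ_product_univ, Finset.sum_product]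
  rw [h0]
  have hsplit : (∑ p : Fin n × Fin n, d p.1 p.2)
      = (∑ p ∈ Finset.univ.filter (fun p : Fin n × Fin n => p.1 < p.2), d p.1 p.2)
        + ∑ p ∈ Finset.univ.filter (fun p : Fin n × Fin n => ¬ p.1 < p.2), d p.1 p.2 :=
    (Finset.sum_filter_add_sum_filter_not _ _ _).symm
  have hsub : (∑ p ∈ Finset.univ.filter (fun p : Fin n × Fin n => ¬ p.1 < p.2), d p.1 p.2)
      = ∑ p ∈ Finset.univ.filter (fun p : Fin n × Fin n => p.2 < p.1), d p.1 p.2 := by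
    symm
    apply Finset.sum_subset
    · intro p hp
      simp only [Finset.mem_filter, Finset.mem_univ, true_and] at hp ⊢
      exact asymm hp
    · intro p hp hnp
      simp only [Finset.mem_filter, Finset.mem_univ, true_and, not_lt] at hp hnp
      have : p.1 = p.2 := le_antisymm hnp hp
      have h2 : d p.1 p.2 = d p.1 p.1 := by rw [this]
      rw [h2, hdiag]
  have hlow : (∑ p ∈ Finset.univ.filter (fun p : Fin n × Fin n => p.2 < p.1), d p.1 p.2)
      = ∑ p ∈ Finset.univ.filter (fun p : Fin n × Fin n => p.1 < p.2), d p.1 p.2 := by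
    apply Finset.sum_nbij' (i := fun p => Prod.swap p) (j := fun p => Prod.swap p)
    · intro p hp
      simp only [Finset.mem_filter, Finset.mem_univ, true_and] at hp ⊢
      exact hp
    · intro p hp
      simp only [Finset.mem_filter, Finset.mem_univ, true_and] at hp ⊢
      exact hp
    · intro p _; exact Prod.swap_swap p
    · intro p _; exact Prod.swap_swap p
    · intro p _; exact hsym p.1 p.2
  rw [hsplit, hsub, hlow]
  unfold upperT
  ring

lemma half_sum (ρ : ℝ) (S : Matrix (Fin k) (Fin k) ℝ) (hSsym : S.IsSymm)
    (z f : Fin n → Fin k) (A : Fin n → Fin n → Bool) (hA : ValidAdj A) :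
    (∑ a : Fin k, ∑ b : Fin k, (oab A f a b - mu ρ S z f a b) * Real.log (S a b))
      = 2 * ∑ p ∈ upperT n,
          (((if A p.1 p.2 then (1:ℝ) else 0) - ρ * S (z p.1) (z p.2)) *
            Real.log (S (f p.1) (f p.2))) := by
  classical
  set d : Fin n → Fin n → ℝ := fun i j =>
    ((if A i j then (1:ℝ) else 0) - if i ≠ j then ρ * S (z i) (z j) else 0) *
      Real.log (S (f i) (f j)) with hd
  have e1 : ∀ a b : Fin k, (oab A f a b - mu ρ S z f a b) * Real.log (S a b)
      = ∑ i : Fin n, ∑ j : Fin n,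
          ((if f i = a ∧ f j = b ∧ A i j then (1:ℝ) else 0)
            - (if f i = a ∧ f j = b ∧ i ≠ j then ρ * S (z i) (z j) else 0))
              * Real.log (S a b) := by
    intro a b
    unfold oab mu
    rw [← Finset.sum_sub_distrib, Finset.sum_mul]
    apply Finset.sum_congr rfl; intro i _
    rw [← Finset.sum_sub_distrib, Finset.sum_mul]
  have e2 : (∑ a : Fin k, ∑ b : Fin k, (oab A f a b - mu ρ S z f a b) * Real.log (S a b))
      = ∑ i : Fin n, ∑ j : Fin n, ∑ a : Fin k, ∑ b : Fin k,
          ((if f i = a ∧ f j = b ∧ A i j then (1:ℝ) else 0)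
            - (if f i = a ∧ f j = b ∧ i ≠ j then ρ * S (z i) (z j) else 0))
              * Real.log (S a b) := by
    rw [Finset.sum_congr rfl (fun a _ => Finset.sum_congr rfl (fun b _ => e1 a b))]
    rw [Finset.sum_congr rfl (fun a _ => Finset.sum_comm)]
    rw [Finset.sum_comm]
    apply Finset.sum_congr rfl; intro i _
    rw [Finset.sum_congr rfl (fun a _ => Finset.sum_comm)]
    rw [Finset.sum_comm]
  have e3 : ∀ i j : Fin n, (∑ a : Fin k, ∑ b : Fin k,
        ((if f i = a ∧ f j = b ∧ A i j then (1:ℝ) else 0)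
          - (if f i = a ∧ f j = b ∧ i ≠ j then ρ * S (z i) (z j) else 0))
            * Real.log (S a b)) = d i j := by
    intro i j
    rw [Finset.sum_eq_single (f i)]
    · rw [Finset.sum_eq_single (f j)]
      · simp only [hd, true_and, and_true, eq_self_iff_true]
      · intro b _ hb
        rw [if_neg (by tauto), if_neg (by tauto)]; ring
      · intro h; exact absurd (Finset.mem_univ _) h
    · intro a _ ha
      apply Finset.sum_eq_zero; intro b _
      rw [if_neg (by tauto), if_neg (by tauto)]; ring
    · intro h; exact absurd (Finset.mem_univ _) h
  rw [e2, Finset.sum_congr rfl (fun i _ => Finset.sum_congr rfl (fun j _ => e3 i j))]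
  have hsym : ∀ i j, d i j = d j i := by
    intro i j
    have h1 : A i j = A j i := hA.1 i j
    have h2 : S (z j) (z i) = S (z i) (z j) := hSsym.apply (z i) (z j)
    have h3 : S (f j) (f i) = S (f i) (f j) := hSsym.apply (f i) (f j)
    simp only [hd, h1, h2, h3, ne_comm]
  have hdiag : ∀ i, d i i = 0 := by
    intro i
    simp only [hd, hA.2 i]
    simp
  rw [sum_eq_two_mul_upper d hsym hdiag]
  congr 1
  apply Finset.sum_congr rfl
  intro p hp
  have hne : p.1 ≠ p.2 := by
    simp only [upperT, Finset.mem_filter] at hp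
    exact ne_of_lt hp.2
  simp only [hd, if_pos hne]

/-- The D constant of the statement. -/
def Dset (S : Matrix (Fin k) (Fin k) ℝ) : Set ℝ :=
  {y : ℝ | ∃ t ∈ Set.Icc (0 : ℝ) 1, ∃ a a' b b' : Fin k,
      a ≠ a' ∧ b ≠ b' ∧ y = Kt t (S a b) (S a' b')}

lemma S_le_sum {S : Matrix (Fin k) (Fin k) ℝ} (hSpos : ∀ a b, 0 < S a b) (a b : Fin k) :
    S a b ≤ ∑ a' : Fin k, ∑ b' : Fin k, S a' b' := by
  calc S a b ≤ ∑ b' : Fin k, S a b' :=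
        Finset.single_le_sum (fun c _ => (hSpos a c).le) (Finset.mem_univ b)
    _ ≤ ∑ a' : Fin k, ∑ b' : Fin k, S a' b' :=
        Finset.single_le_sum (fun c _ => Finset.sum_nonneg fun d _ => (hSpos c d).le)
          (Finset.mem_univ a)

lemma Dset_bddAbove {S : Matrix (Fin k) (Fin k) ℝ} (hSpos : ∀ a b, 0 < S a b) :
    BddAbove (Dset S) := by
  refine ⟨(∑ a : Fin k, ∑ b : Fin k, S a b) +
    ∑ a : Fin k, ∑ b : Fin k, ∑ a' : Fin k, ∑ b' : Fin k,
      |S a b * Real.log (S a b / S a' b')|, ?_⟩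
  rintro y ⟨t, ht, a, a', b, b', -, -, rfl⟩
  have h1 := Kt_le (S a b) (S a' b') (hSpos a b) (hSpos a' b') ht
  have h2 : max (S a b) (S a' b') ≤ ∑ a : Fin k, ∑ b : Fin k, S a b :=
    max_le (S_le_sum hSpos a b) (S_le_sum hSpos a' b')
  have h3 : |S a b * Real.log (S a b / S a' b')| ≤
      ∑ c : Fin k, ∑ d : Fin k, ∑ c' : Fin k, ∑ d' : Fin k,
        |S c d * Real.log (S c d / S c' d')| := by
    have habs : ∀ (c d c' d' : Fin k), (0:ℝ) ≤ |S c d * Real.log (S c d / S c' d')| :=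
      fun _ _ _ _ => abs_nonneg _
    calc |S a b * Real.log (S a b / S a' b')|
        ≤ ∑ d' : Fin k, |S a b * Real.log (S a b / S a' d')| :=
          Finset.single_le_sum (f := fun d' => |S a b * Real.log (S a b / S a' d')|)
            (fun c _ => habs _ _ _ _) (Finset.mem_univ b')
      _ ≤ ∑ c' : Fin k, ∑ d' : Fin k, |S a b * Real.log (S a b / S c' d')| :=
          Finset.single_le_sum
            (f := fun c' => ∑ d' : Fin k, |S a b * Real.log (S a b / S c' d')|)
            (fun c _ => Finset.sum_nonneg fun d _ => habs _ _ _ _) (Finset.mem_univ a')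
      _ ≤ ∑ d : Fin k, ∑ c' : Fin k, ∑ d' : Fin k, |S a d * Real.log (S a d / S c' d')| :=
          Finset.single_le_sum
            (f := fun d => ∑ c' : Fin k, ∑ d' : Fin k, |S a d * Real.log (S a d / S c' d')|)
            (fun c _ => Finset.sum_nonneg fun d _ => Finset.sum_nonneg fun x _ => habs _ _ _ _)
            (Finset.mem_univ b)
      _ ≤ _ :=
          Finset.single_le_sum
            (f := fun c => ∑ d : Fin k, ∑ c' : Fin k, ∑ d' : Fin k,
              |S c d * Real.log (S c d / S c' d')|)
            (fun c _ => Finset.sum_nonneg fun d _ => Finset.sum_nonneg fun x _ =>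
              Finset.sum_nonneg fun y _ => habs _ _ _ _)
            (Finset.mem_univ a)
  linarith

lemma Dset_elem_le {S : Matrix (Fin k) (Fin k) ℝ} (hSpos : ∀ a b, 0 < S a b)
    {t : ℝ} (ht : t ∈ Set.Icc (0:ℝ) 1) {a a' b b' : Fin k} (ha : a ≠ a') (hb : b ≠ b') :
    Kt t (S a b) (S a' b') ≤ sSup (Dset S) :=
  le_csSup (Dset_bddAbove hSpos) ⟨t, ht, a, a', b, b', ha, hb, rfl⟩

lemma ct_bound (S : Matrix (Fin k) (Fin k) ℝ) (hSpos : ∀ a b, 0 < S a b)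
    (hSsym : S.IsSymm) (z e : Fin n → Fin k) {t : ℝ} (ht : t ∈ Set.Icc (0:ℝ) 1)
    (hn : 0 < n) :
    (∑ p ∈ upperT n, Kt t (S (z p.1) (z p.2)) (S (e p.1) (e p.2)))
      ≤ (n : ℝ)^2 * CtRS t (confusion e z) S
        + (sSup (Dset S)) * (hamming e z : ℝ)^2 := by
  classical
  set K : Fin n → Fin n → ℝ := fun i j => Kt t (S (z i) (z j)) (S (e i) (e j)) with hK
  have hKsym : ∀ i j, K i j = K j i := by
    intro i j
    simp only [hK, hSsym.apply (z i) (z j), hSsym.apply (e i) (e j)]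
  have hKnn : ∀ i j, 0 ≤ K i j := fun i j => Kt_nonneg (hSpos _ _) (hSpos _ _)
  set TF : Fin n → Fin n → ℝ := fun i j =>
    if e i = z i ∧ e j ≠ z j then K i j else 0 with hTF
  set TF' : Fin n → Fin n → ℝ := fun i j =>
    if e i ≠ z i ∧ e j = z j then K i j else 0 with hTF'
  set FF : Fin n → Fin n → ℝ := fun i j =>
    if e i ≠ z i ∧ e j ≠ z j then K i j else 0 with hFF
  set D := sSup (Dset S) with hD
  -- halving identity
  have h1 : 2 * (∑ p ∈ upperT n, K p.1 p.2)
      = ∑ i : Fin n, ∑ j : Fin n, (if i ≠ j then K i j else 0) := by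
    rw [sum_eq_two_mul_upper (fun i j => if i ≠ j then K i j else 0)
      (by intro i j; rw [hKsym i j]; congr 1; rw [ne_comm])
      (by intro i; rw [if_neg (by simp)])]
    congr 1
    apply Finset.sum_congr rfl
    intro p hp
    have hne : p.1 ≠ p.2 := by
      simp only [upperT, Finset.mem_filter] at hp
      exact ne_of_lt hp.2
    rw [if_pos hne]
  -- termwise bound
  have hterm : ∀ i j, (if i ≠ j then K i j else 0) ≤ TF i j + TF' i j + FF i j := by
    intro i j
    have nn1 : 0 ≤ TF i j := by rw [hTF]; dsimp only; split_ifs; exacts [hKnn i j, le_refl 0]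
    have nn2 : 0 ≤ TF' i j := by rw [hTF']; dsimp only; split_ifs; exacts [hKnn i j, le_refl 0]
    have nn3 : 0 ≤ FF i j := by rw [hFF]; dsimp only; split_ifs; exacts [hKnn i j, le_refl 0]
    by_cases hij : i ≠ j
    · rw [if_pos hij]
      by_cases h1' : e i = z i <;> by_cases h2' : e j = z j
      · have : K i j = 0 := by
          rw [hK]; dsimp only; rw [h1', h2', Kt_self (hSpos _ _)]
        rw [this]; linarith
      · have : TF i j = K i j := by rw [hTF]; dsimp only; rw [if_pos ⟨h1', h2'⟩]
        linarith
      · have : TF' i j = K i j := by rw [hTF']; dsimp only; rw [if_pos ⟨h1', h2'⟩]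
        linarith
      · have : FF i j = K i j := by rw [hFF]; dsimp only; rw [if_pos ⟨h1', h2'⟩]
        linarith
    · rw [if_neg hij]; linarith
  -- TF' = TF after swapping
  have hTFswap : (∑ i : Fin n, ∑ j : Fin n, TF' i j) = ∑ i : Fin n, ∑ j : Fin n, TF i j := by
    have : ∀ i j, TF' i j = TF j i := by
      intro i j
      rw [hTF', hTF]; dsimp only
      rw [hKsym i j]
      congr 1
      rw [and_comm]
    rw [Finset.sum_congr rfl fun i _ => Finset.sum_congr rfl fun j _ => this i j]
    exact Finset.sum_comm
  -- TF bound
  have hne0 : (n : ℝ) ≠ 0 := Nat.cast_ne_zero.mpr hn.ne'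
  set G : Fin n → Fin n → ℝ := fun i j =>
    if e j ≠ z j then Kt t (S (z i) (z j)) (S (z i) (e j)) else 0 with hGdef
  have hG : ∀ i j, TF i j ≤ G i j := by
    intro i j
    rw [hTF, hGdef]; dsimp only
    by_cases h1' : e i = z i <;> by_cases h2' : e j ≠ z j
    · rw [if_pos ⟨h1', h2'⟩, if_pos h2', hK]; dsimp only; rw [h1']
    · rw [if_neg (by tauto), if_neg h2']
    · rw [if_neg (by tauto), if_pos h2']
      exact Kt_nonneg (hSpos _ _) (hSpos _ _)
    · rw [if_neg (by tauto), if_neg h2']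
  have hcol : ∀ a : Fin k, colSum (confusion e z) a
      = (1 / (n:ℝ)) * ∑ m : Fin n, (if z m = a then (1:ℝ) else 0) := by
    intro a
    unfold colSum confusion
    simp only [Matrix.of_apply]
    rw [← Finset.mul_sum]
    congr 1
    rw [Finset.sum_comm]
    apply Finset.sum_congr rfl
    intro m _
    rw [Finset.sum_eq_single (e m)]
    · by_cases hz : z m = a
      · rw [if_pos ⟨rfl, hz⟩, if_pos hz]
      · rw [if_neg (by tauto), if_neg hz]
    · intro c _ hc; rw [if_neg (by tauto)]
    · intro h; exact absurd (Finset.mem_univ _) h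
  have hab : ∀ a : Fin k, (n:ℝ)^2 * ∑ p ∈ offDiag k,
      colSum (confusion e z) a * Kt t (S a p.1) (S a p.2) * confusion e z p.2 p.1
      = (∑ m : Fin n, (if z m = a then (1:ℝ) else 0)) *
          ∑ p ∈ offDiag k, (∑ j : Fin n, if e j = p.2 ∧ z j = p.1 then (1:ℝ) else 0)
            * Kt t (S a p.1) (S a p.2) := by
    intro a
    rw [Finset.mul_sum, Finset.mul_sum]
    apply Finset.sum_congr rfl
    intro p _
    rw [hcol a]
    have hR : confusion e z p.2 p.1
        = (1/(n:ℝ)) * ∑ j : Fin n, (if e j = p.2 ∧ z j = p.1 then (1:ℝ) else 0) := rfl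
    rw [hR]
    field_simp
  have hCt : (n : ℝ)^2 * CtRS t (confusion e z) S
      = ∑ i : Fin n, ∑ j : Fin n, G i j := by
    unfold CtRS
    rw [Finset.mul_sum]
    rw [Finset.sum_congr rfl fun a _ => hab a]
    have hstep : ∀ a : Fin k, (∑ m : Fin n, (if z m = a then (1:ℝ) else 0)) *
        (∑ p ∈ offDiag k, (∑ j : Fin n, if e j = p.2 ∧ z j = p.1 then (1:ℝ) else 0)
          * Kt t (S a p.1) (S a p.2))
        = ∑ m : Fin n, (if z m = a then (1:ℝ) else 0) *
            ∑ j : Fin n, ∑ p ∈ offDiag k,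
              (if e j = p.2 ∧ z j = p.1 then (1:ℝ) else 0) * Kt t (S a p.1) (S a p.2) := by
      intro a
      rw [Finset.sum_mul]
      apply Finset.sum_congr rfl
      intro m _
      congr 1
      rw [Finset.sum_comm]
      apply Finset.sum_congr rfl
      intro p _
      rw [Finset.sum_mul]
    rw [Finset.sum_congr rfl fun a _ => hstep a]
    rw [Finset.sum_comm]
    apply Finset.sum_congr rfl
    intro m _
    rw [Finset.sum_eq_single (z m)]
    · rw [if_pos rfl, one_mul]
      apply Finset.sum_congr rfl
      intro j _
      rw [Finset.sum_eq_single ((z j, e j) : Fin k × Fin k)]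
      · by_cases hj : e j ≠ z j
        · rw [if_pos (show e j = e j ∧ z j = z j from ⟨rfl, rfl⟩), one_mul, hGdef]
          dsimp only
          rw [if_pos hj]
        · push_neg at hj
          rw [if_pos (show e j = e j ∧ z j = z j from ⟨rfl, rfl⟩), one_mul, hGdef]
          dsimp only
          rw [if_neg (by tauto), hj, Kt_self (hSpos _ _)]
      · intro p _ hp
        rw [if_neg ?_, zero_mul]
        intro hcond
        exact hp (Prod.ext hcond.2.symm hcond.1.symm)
      · intro hnm
        simp only [offDiag, Finset.mem_filter, Finset.mem_univ, true_and] at hnm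
        push_neg at hnm
        rw [if_pos (show e j = e j ∧ z j = z j from ⟨rfl, rfl⟩), one_mul]
        have hzj : e j = z j := hnm.symm
        rw [hzj, Kt_self (hSpos _ _)]
    · intro a _ ha
      rw [if_neg (Ne.symm ha), zero_mul]
    · intro h; exact absurd (Finset.mem_univ _) h
  have hTFle : (∑ i : Fin n, ∑ j : Fin n, TF i j)
      ≤ (n : ℝ)^2 * CtRS t (confusion e z) S := by
    rw [hCt]
    exact Finset.sum_le_sum fun i _ => Finset.sum_le_sum fun j _ => hG i j
  -- FF bound
  set c : Fin n → ℝ := fun i => if e i ≠ z i then (1:ℝ) else 0 with hc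
  have hcnn : ∀ i, 0 ≤ c i := by
    intro i; rw [hc]; dsimp only; split_ifs; exacts [zero_le_one, le_refl 0]
  have hFFterm : ∀ i j, FF i j ≤ c i * c j * D := by
    intro i j
    rw [hFF, hc]; dsimp only
    by_cases h1' : e i ≠ z i <;> by_cases h2' : e j ≠ z j
    · rw [if_pos ⟨h1', h2'⟩, if_pos h1', if_pos h2', one_mul, one_mul, hK, hD]
      exact Dset_elem_le hSpos ht (Ne.symm h1') (Ne.symm h2')
    · rw [if_neg (by tauto), if_neg h2', mul_zero, zero_mul]
    · rw [if_neg (by tauto), if_neg h1', zero_mul, zero_mul]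
    · rw [if_neg (by tauto), if_neg h2', mul_zero, zero_mul]
  have hcsum : (∑ i : Fin n, c i) = (hamming e z : ℝ) := by
    rw [hc]
    unfold hamming
    rw [Finset.sum_boole]
  have hFFle : (∑ i : Fin n, ∑ j : Fin n, FF i j) ≤ D * (hamming e z : ℝ)^2 := by
    calc (∑ i : Fin n, ∑ j : Fin n, FF i j)
        ≤ ∑ i : Fin n, ∑ j : Fin n, c i * c j * D :=
          Finset.sum_le_sum fun i _ => Finset.sum_le_sum fun j _ => hFFterm i j
      _ = (∑ i : Fin n, c i) * (∑ j : Fin n, c j) * D := by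
          rw [Finset.sum_mul, Finset.sum_mul]
          apply Finset.sum_congr rfl
          intro i _
          rw [Finset.mul_sum, Finset.sum_mul]
      _ = D * (hamming e z : ℝ)^2 := by rw [hcsum]; ring
  have hD2 : 0 ≤ D * (hamming e z : ℝ)^2 := by
    by_cases hd : hamming e z = 0
    · rw [hd]; simp
    · obtain ⟨i, hi⟩ := Finset.card_pos.mp (Nat.pos_of_ne_zero hd)
      have hi' : e i ≠ z i := (Finset.mem_filter.mp hi).2
      have h0 : 0 ≤ Kt t (S (z i) (z i)) (S (e i) (e i)) :=
        Kt_nonneg (hSpos _ _) (hSpos _ _)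
      have h1' : Kt t (S (z i) (z i)) (S (e i) (e i)) ≤ D :=
        Dset_elem_le hSpos ht (Ne.symm hi') (Ne.symm hi')
      exact mul_nonneg (le_trans h0 h1') (sq_nonneg _)
  -- assemble
  have hsum : (∑ i : Fin n, ∑ j : Fin n, (if i ≠ j then K i j else 0))
      ≤ (∑ i : Fin n, ∑ j : Fin n, TF i j) + (∑ i : Fin n, ∑ j : Fin n, TF' i j)
        + ∑ i : Fin n, ∑ j : Fin n, FF i j := by
    calc (∑ i : Fin n, ∑ j : Fin n, (if i ≠ j then K i j else 0))
        ≤ ∑ i : Fin n, ∑ j : Fin n, (TF i j + TF' i j + FF i j) :=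
          Finset.sum_le_sum fun i _ => Finset.sum_le_sum fun j _ => hterm i j
      _ = _ := by
          rw [← Finset.sum_add_distrib, ← Finset.sum_add_distrib]
          apply Finset.sum_congr rfl
          intro i _
          rw [← Finset.sum_add_distrib, ← Finset.sum_add_distrib]
  rw [hTFswap] at hsum
  linarith


/-- Chernoff bound for the weighted centered edge-count difference. -/
theorem stmt16 (n k : ℕ) (S : Matrix (Fin k) (Fin k) ℝ) (hSsym : S.IsSymm)
    (hSpos : ∀ a b, 0 < S a b) (ρ : ℝ) (hρ0 : 0 < ρ) (hρ1 : ∀ a b, ρ * S a b < 1)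
    (z e : Fin n → Fin k) (x : ℝ) (hx : 0 < x) :
    condProb ρ S z (fun A =>
        x < (1 / 2) * ∑ a : Fin k, ∑ b : Fin k,
            (oab A e a b / (n : ℝ) ^ 2
                - condExp ρ S z (fun A' => oab A' e a b) / (n : ℝ) ^ 2
                - oab A z a b / (n : ℝ) ^ 2
                + condExp ρ S z (fun A' => oab A' z a b) / (n : ℝ) ^ 2) *
              Real.log (S a b))
      ≤ Real.exp
          (-(sSup ((fun t => (n : ℝ) ^ 2 * x * t - ρ * (n : ℝ) ^ 2 *
                CtRS t (confusion e z) S) '' Set.Ioc (0 : ℝ) 1))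
            + (sSup {y : ℝ | ∃ t ∈ Set.Icc (0 : ℝ) 1, ∃ a a' b b' : Fin k,
                  a ≠ a' ∧ b ≠ b' ∧ y = Kt t (S a b) (S a' b')}) *
              ρ * (hamming e z : ℝ) ^ 2) := by
  classical
  by_cases hn : n = 0
  · subst hn
    refine le_trans (le_of_eq ?_) (Real.exp_pos _).le
    apply Finset.sum_eq_zero
    intro A _
    rw [if_neg]
    rintro ⟨-, h⟩
    have h0 : ((0:ℕ) : ℝ) ^ 2 = 0 := by norm_num
    simp only [h0, div_zero] at h
    simp only [sub_zero, add_zero, zero_sub, neg_zero, zero_mul, Finset.sum_const_zero,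
      mul_zero] at h
    linarith
  · have hn' : 0 < n := Nat.pos_of_ne_zero hn
    have hnsq : (0:ℝ) < (n:ℝ)^2 := by positivity
    set d : ℝ := (hamming e z : ℝ) with hdd
    set D : ℝ := sSup (Dset S) with hDD
    set W' : (Fin n → Fin n → Bool) → ℝ := fun A =>
      ∑ p ∈ upperT n, (((if A p.1 p.2 then (1:ℝ) else 0) - ρ * S (z p.1) (z p.2)) *
        (Real.log (S (e p.1) (e p.2)) - Real.log (S (z p.1) (z p.2)))) with hW'
    set L : ℝ := condProb ρ S z (fun A =>
        x < (1 / 2) * ∑ a : Fin k, ∑ b : Fin k,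
            (oab A e a b / (n : ℝ) ^ 2
                - condExp ρ S z (fun A' => oab A' e a b) / (n : ℝ) ^ 2
                - oab A z a b / (n : ℝ) ^ 2
                + condExp ρ S z (fun A' => oab A' z a b) / (n : ℝ) ^ 2) *
              Real.log (S a b)) with hL
    -- the event in canonical form
    have hterm : ∀ A : Fin n → Fin n → Bool, ValidAdj A →
        (1 / 2 : ℝ) * (∑ a : Fin k, ∑ b : Fin k,
            (oab A e a b / (n : ℝ) ^ 2
                - condExp ρ S z (fun A' => oab A' e a b) / (n : ℝ) ^ 2
                - oab A z a b / (n : ℝ) ^ 2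
                + condExp ρ S z (fun A' => oab A' z a b) / (n : ℝ) ^ 2) *
              Real.log (S a b)) = W' A / (n : ℝ) ^ 2 := by
      intro A hA
      have e1 : ∀ a b : Fin k,
          (oab A e a b / (n : ℝ) ^ 2
              - condExp ρ S z (fun A' => oab A' e a b) / (n : ℝ) ^ 2
              - oab A z a b / (n : ℝ) ^ 2
              + condExp ρ S z (fun A' => oab A' z a b) / (n : ℝ) ^ 2) * Real.log (S a b)
          = ((oab A e a b - mu ρ S z e a b) * Real.log (S a b)
              - (oab A z a b - mu ρ S z z a b) * Real.log (S a b)) / (n : ℝ) ^ 2 := by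
        intro a b
        rw [condExp_oab ρ S hSsym z e a b, condExp_oab ρ S hSsym z z a b]
        ring
      rw [Finset.sum_congr rfl fun a _ => Finset.sum_congr rfl fun b _ => e1 a b]
      rw [Finset.sum_congr rfl fun a _ => (Finset.sum_div _ _ _).symm,
        ← Finset.sum_div]
      rw [Finset.sum_congr rfl fun a _ => Finset.sum_sub_distrib _ _,
        Finset.sum_sub_distrib]
      rw [half_sum ρ S hSsym z e A hA, half_sum ρ S hSsym z z A hA]
      have hW2 : W' A = (∑ p ∈ upperT n,
            (((if A p.1 p.2 then (1:ℝ) else 0) - ρ * S (z p.1) (z p.2)) *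
              Real.log (S (e p.1) (e p.2))))
          - ∑ p ∈ upperT n,
            (((if A p.1 p.2 then (1:ℝ) else 0) - ρ * S (z p.1) (z p.2)) *
              Real.log (S (z p.1) (z p.2))) := by
        rw [hW', ← Finset.sum_sub_distrib]
        apply Finset.sum_congr rfl
        intro p _
        ring
      rw [hW2]
      ring
    have hiff : ∀ A : Fin n → Fin n → Bool, ValidAdj A →
        ((x < (1 / 2) * ∑ a : Fin k, ∑ b : Fin k,
            (oab A e a b / (n : ℝ) ^ 2
                - condExp ρ S z (fun A' => oab A' e a b) / (n : ℝ) ^ 2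
                - oab A z a b / (n : ℝ) ^ 2
                + condExp ρ S z (fun A' => oab A' z a b) / (n : ℝ) ^ 2) *
              Real.log (S a b)) ↔ ((n:ℝ)^2 * x < W' A)) := by
      intro A hA
      rw [hterm A hA, lt_div_iff₀ hnsq, mul_comm]
    -- the key Chernoff estimate for each t
    have key : ∀ t ∈ Set.Ioc (0:ℝ) 1,
        L ≤ Real.exp (-((n : ℝ) ^ 2 * x * t - ρ * (n : ℝ) ^ 2 *
              CtRS t (confusion e z) S) + D * ρ * d ^ 2) := by
      rintro t ⟨ht0, ht1⟩
      set g : Fin n × Fin n → Bool → ℝ := fun p b =>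
        (if b then ρ * S (z p.1) (z p.2) else 1 - ρ * S (z p.1) (z p.2)) *
          Real.exp (t * ((if b then (1:ℝ) else 0) - ρ * S (z p.1) (z p.2)) *
            (Real.log (S (e p.1) (e p.2)) - Real.log (S (z p.1) (z p.2)))) with hg
      have hmarkov : L ≤ ∑ A : Fin n → Fin n → Bool,
          if ValidAdj A then
            edgeDensity ρ S z A * Real.exp (t * (W' A - (n:ℝ)^2 * x)) else 0 := by
        rw [hL]
        unfold condProb
        apply Finset.sum_le_sum
        intro A _
        by_cases hAv : ValidAdj A
        · by_cases hE : x < (1 / 2) * ∑ a : Fin k, ∑ b : Fin k,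
              (oab A e a b / (n : ℝ) ^ 2
                  - condExp ρ S z (fun A' => oab A' e a b) / (n : ℝ) ^ 2
                  - oab A z a b / (n : ℝ) ^ 2
                  + condExp ρ S z (fun A' => oab A' z a b) / (n : ℝ) ^ 2) *
                Real.log (S a b)
          · rw [if_pos ⟨hAv, hE⟩, if_pos hAv]
            have hgt : (n:ℝ)^2 * x < W' A := (hiff A hAv).mp hE
            have h1 : (1:ℝ) ≤ Real.exp (t * (W' A - (n:ℝ)^2 * x)) := by
              apply Real.one_le_exp
              have : 0 < W' A - (n:ℝ)^2 * x := by linarith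
              positivity
            exact le_mul_of_one_le_right (edge_nonneg ρ S hSpos hρ0 hρ1 z A) h1
          · rw [if_neg (by tauto), if_pos hAv]
            exact mul_nonneg (edge_nonneg ρ S hSpos hρ0 hρ1 z A) (Real.exp_pos _).le
        · rw [if_neg (by tauto), if_neg hAv]
      have hfact : (∑ A : Fin n → Fin n → Bool,
          if ValidAdj A then
            edgeDensity ρ S z A * Real.exp (t * (W' A - (n:ℝ)^2 * x)) else 0)
          = Real.exp (-(t * ((n:ℝ)^2 * x))) * ∏ p ∈ upperT n, (g p false + g p true) := by
        have hA1 : ∀ A : Fin n → Fin n → Bool, ValidAdj A →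
            edgeDensity ρ S z A * Real.exp (t * (W' A - (n:ℝ)^2 * x))
              = Real.exp (-(t * ((n:ℝ)^2 * x))) * ∏ p ∈ upperT n, g p (A p.1 p.2) := by
          intro A hA
          have e1 : t * (W' A - (n:ℝ)^2 * x) = t * W' A + -(t * ((n:ℝ)^2 * x)) := by ring
          rw [e1, Real.exp_add]
          have e2 : t * W' A = ∑ p ∈ upperT n,
              t * ((if A p.1 p.2 then (1:ℝ) else 0) - ρ * S (z p.1) (z p.2)) *
                (Real.log (S (e p.1) (e p.2)) - Real.log (S (z p.1) (z p.2))) := by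
            rw [hW', Finset.mul_sum]
            apply Finset.sum_congr rfl
            intro p _
            ring
          rw [e2, Real.exp_sum, edgeDensity_eq_prod, ← mul_assoc, ← Finset.prod_mul_distrib,
            mul_comm]
        calc (∑ A : Fin n → Fin n → Bool,
            if ValidAdj A then
              edgeDensity ρ S z A * Real.exp (t * (W' A - (n:ℝ)^2 * x)) else 0)
            = ∑ A : Fin n → Fin n → Bool,
              Real.exp (-(t * ((n:ℝ)^2 * x))) *
                (if ValidAdj A then ∏ p ∈ upperT n, g p (A p.1 p.2) else 0) := by
              apply Finset.sum_congr rfl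
              intro A _
              by_cases hAv : ValidAdj A
              · rw [if_pos hAv, if_pos hAv, hA1 A hAv]
              · rw [if_neg hAv, if_neg hAv, mul_zero]
          _ = Real.exp (-(t * ((n:ℝ)^2 * x))) *
              ∑ A : Fin n → Fin n → Bool,
                (if ValidAdj A then ∏ p ∈ upperT n, g p (A p.1 p.2) else 0) := by
              rw [Finset.mul_sum]
          _ = _ := by rw [sum_valid_prod]
      have hprod : (∏ p ∈ upperT n, (g p false + g p true))
          ≤ ∏ p ∈ upperT n,
              Real.exp (ρ * Kt t (S (z p.1) (z p.2)) (S (e p.1) (e p.2))) := by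
        apply Finset.prod_le_prod
        · intro p _
          rw [hg]
          have hq1 : ρ * S (z p.1) (z p.2) < 1 := hρ1 _ _
          have hq0 : 0 < ρ * S (z p.1) (z p.2) := mul_pos hρ0 (hSpos _ _)
          have e0 : (0:ℝ) ≤ 1 - ρ * S (z p.1) (z p.2) := by linarith
          positivity
        · intro p _
          rw [hg]
          simp only [if_true, if_false, Bool.false_eq_true, ite_true, ite_false]
          rw [add_comm]
          exact mgf_edge ρ (S (z p.1) (z p.2)) (S (e p.1) (e p.2)) t
            (hSpos _ _) (hSpos _ _) hρ0
      have hsumK : (∑ p ∈ upperT n, Kt t (S (z p.1) (z p.2)) (S (e p.1) (e p.2)))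
          ≤ (n : ℝ)^2 * CtRS t (confusion e z) S + D * d^2 := by
        rw [hDD, hdd]
        exact ct_bound S hSpos hSsym z e ⟨ht0.le, ht1⟩ hn'
      calc L ≤ ∑ A : Fin n → Fin n → Bool,
            if ValidAdj A then
              edgeDensity ρ S z A * Real.exp (t * (W' A - (n:ℝ)^2 * x)) else 0 := hmarkov
        _ = Real.exp (-(t * ((n:ℝ)^2 * x))) *
            ∏ p ∈ upperT n, (g p false + g p true) := hfact
        _ ≤ Real.exp (-(t * ((n:ℝ)^2 * x))) *
            ∏ p ∈ upperT n,
              Real.exp (ρ * Kt t (S (z p.1) (z p.2)) (S (e p.1) (e p.2))) :=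
            mul_le_mul_of_nonneg_left hprod (Real.exp_pos _).le
        _ = Real.exp (-(t * ((n:ℝ)^2 * x)) +
              ρ * ∑ p ∈ upperT n, Kt t (S (z p.1) (z p.2)) (S (e p.1) (e p.2))) := by
            rw [← Real.exp_sum, ← Real.exp_add, Finset.mul_sum]
        _ ≤ Real.exp (-((n : ℝ) ^ 2 * x * t - ρ * (n : ℝ) ^ 2 *
              CtRS t (confusion e z) S) + D * ρ * d ^ 2) := by
            apply Real.exp_le_exp.mpr
            have h2 : ρ * ∑ p ∈ upperT n, Kt t (S (z p.1) (z p.2)) (S (e p.1) (e p.2))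
                ≤ ρ * ((n : ℝ)^2 * CtRS t (confusion e z) S + D * d^2) :=
              mul_le_mul_of_nonneg_left hsumK hρ0.le
            nlinarith [h2]
    -- conclude via the supremum
    by_cases hLpos : 0 < L
    · have hne : ((fun t => (n : ℝ) ^ 2 * x * t - ρ * (n : ℝ) ^ 2 *
          CtRS t (confusion e z) S) '' Set.Ioc (0 : ℝ) 1).Nonempty :=
        ⟨_, ⟨1, ⟨one_pos, le_refl 1⟩, rfl⟩⟩
      have hub : ∀ y ∈ ((fun t => (n : ℝ) ^ 2 * x * t - ρ * (n : ℝ) ^ 2 *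
          CtRS t (confusion e z) S) '' Set.Ioc (0 : ℝ) 1),
          y ≤ D * ρ * d ^ 2 - Real.log L := by
        rintro y ⟨t, ht, rfl⟩
        have h1 := key t ht
        have h2 : Real.log L ≤ -((n : ℝ) ^ 2 * x * t - ρ * (n : ℝ) ^ 2 *
            CtRS t (confusion e z) S) + D * ρ * d ^ 2 := by
          have := Real.log_le_log hLpos h1
          rwa [Real.log_exp] at this
        dsimp only
        linarith
      have hsup : sSup ((fun t => (n : ℝ) ^ 2 * x * t - ρ * (n : ℝ) ^ 2 *
            CtRS t (confusion e z) S) '' Set.Ioc (0 : ℝ) 1)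
          ≤ D * ρ * d ^ 2 - Real.log L := csSup_le hne hub
      calc L = Real.exp (Real.log L) := (Real.exp_log hLpos).symm
        _ ≤ _ := by
            apply Real.exp_le_exp.mpr
            have hDeq : sSup {y : ℝ | ∃ t ∈ Set.Icc (0:ℝ) 1, ∃ a a' b b' : Fin k,
                a ≠ a' ∧ b ≠ b' ∧ y = Kt t (S a b) (S a' b')} = D := rfl
            rw [hDeq]
            linarith
    · push_neg at hLpos
      exact le_trans hLpos (Real.exp_pos _).le
end SBM
end
end

section
/- Let 0 < s_min ≤ s_max. There exists a constant c > 0 depending only on s_min and s_max such that for all p, q ∈ [s_min, s_max] and all ρ ∈ (0, 1/(2 s_max)]: KL(ρp‖ρq) ≥ ρ K₁(p‖q) − c ρ², where KL(s‖t) = s log(s/t) + (1−s) log((1−s)/(1−t)) is the Kullback–Leibler divergence between Bernoulli(s) and Bernoulli(t), and K₁(p‖q) = p log(p/q) + q − p. -/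
open Finset Filter
open scoped Classical BigOperators Topology

noncomputable section

namespace SBM

variable {n k : ℕ}

lemma log_one_sub_lb {x : ℝ} (hx0 : 0 < x) (hx : x ≤ 1/2) :
    -x - 2*x^2 ≤ Real.log (1-x) := by
  have h1 : 0 < 1 - x := by linarith
  have h := Real.log_le_sub_one_of_pos (show (0:ℝ) < (1-x)⁻¹ by positivity)
  rw [Real.log_inv] at h
  have he : (1-x)⁻¹ - 1 = x / (1-x) := by field_simp; ring
  rw [he] at h
  have h2 : x / (1-x) ≤ x + 2*x^2 := by
    rw [div_le_iff₀ h1]; nlinarith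
  linarith

lemma log_one_sub_ub {x : ℝ} (hx0 : 0 < x) (hx : x < 1) :
    Real.log (1-x) ≤ -x := by
  have := Real.log_le_sub_one_of_pos (show (0:ℝ) < 1 - x by linarith)
  linarith

/-- Bernoulli KL divergence versus its Poisson-type approximation. -/
theorem stmt19 (smin smax : ℝ) (h0 : 0 < smin) (hle : smin ≤ smax) :
    ∃ c > (0 : ℝ), ∀ p q ρ : ℝ, p ∈ Set.Icc smin smax → q ∈ Set.Icc smin smax →
      0 < ρ → ρ ≤ 1 / (2 * smax) →
      ρ * K1 p q - c * ρ ^ 2 ≤ KLBern (ρ * p) (ρ * q) := by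
  have hsmax : 0 < smax := lt_of_lt_of_le h0 hle
  refine ⟨4 * smax ^ 2, by positivity, ?_⟩
  rintro p q ρ ⟨hp1, hp2⟩ ⟨hq1, hq2⟩ hρ hρ2
  have hp0 : 0 < p := lt_of_lt_of_le h0 hp1
  have hq0 : 0 < q := lt_of_lt_of_le h0 hq1
  have hsm : ρ * smax ≤ 1/2 := by
    have h2 := (le_div_iff₀ (by positivity : (0:ℝ) < 2 * smax)).mp hρ2
    nlinarith
  have ha0 : 0 < ρ * p := by positivity
  have hb0 : 0 < ρ * q := by positivity
  have ha : ρ * p ≤ ρ * smax := by nlinarith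
  have hb : ρ * q ≤ ρ * smax := by nlinarith
  have ha2 : ρ * p ≤ 1/2 := le_trans ha hsm
  have hb2 : ρ * q ≤ 1/2 := le_trans hb hsm
  have h1a : 0 < 1 - ρ * p := by linarith
  have h1b : 0 < 1 - ρ * q := by linarith
  have hL1lb := log_one_sub_lb ha0 ha2
  have hL1ub := log_one_sub_ub ha0 (by linarith)
  have hL2lb := log_one_sub_lb hb0 hb2
  have hL2ub := log_one_sub_ub hb0 (by linarith)
  unfold KLBern K1
  have hlog : Real.log (ρ * p / (ρ * q)) = Real.log (p / q) := by
    rw [mul_div_mul_left _ _ (ne_of_gt hρ)]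
  rw [hlog, Real.log_div (ne_of_gt h1a) (ne_of_gt h1b)]
  set L1 := Real.log (1 - ρ * p)
  set L2 := Real.log (1 - ρ * q)
  have hA : L1 - L2 ≤ ρ * q + 2 * (ρ * q) ^ 2 := by linarith
  have hB : ρ * p * (L1 - L2) ≤ ρ * p * (ρ * q + 2 * (ρ * q) ^ 2) :=
    mul_le_mul_of_nonneg_left hA (le_of_lt ha0)
  have key : ρ * q - ρ * p - 4 * smax ^ 2 * ρ ^ 2 ≤ (1 - ρ * p) * (L1 - L2) := by
    have hC : L1 - L2 ≥ (ρ * q - ρ * p) - 2 * (ρ * p) ^ 2 := by linarith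
    nlinarith [mul_le_mul ha ha (le_of_lt ha0) (by positivity),
      mul_le_mul ha hb (le_of_lt hb0) (by positivity),
      mul_le_mul hb hb (le_of_lt hb0) (by positivity), ha0.le, hb0.le,
      mul_le_mul_of_nonneg_left hb2 (mul_nonneg ha0.le hb0.le)]
  nlinarith [key]
end SBM
end
end
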